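/- Suppose the TIN-convexity conditions (C1) and (C2) hold. Then the general TIN-achievable GDoF region is a polyhedron: P* = P_id(𝒦); in particular, P* equals the set of all d ∈ ℝ_{≥0}^𝒦 satisfying the TIN cyclic system for the identity decoding order, and P* is convex. -/
import Mathlib


open Finset

/-- The set of users `𝒦`: a cell `k : Fin K` together with a user index in `Fin (L k)`. -/
abbrev User {K : ℕ} (L : Fin K → ℕ) := (k : Fin K) × Fin (L k)

/-- The cyclically previous index in `Fin m` (i.e. `j - 1` modulo `m`). -/
def prevIdx {m : ℕ} (j : Fin m) : Fin m :=
  ⟨(j.val + (m - 1)) % m, Nat.mod_lt _ j.pos⟩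

/-- The cyclically next index in `Fin m` (i.e. `j + 1` modulo `m`). -/
def nextIdx {m : ℕ} (j : Fin m) : Fin m :=
  ⟨(j.val + 1) % m, Nat.mod_lt _ j.pos⟩

/-- The identity decoding order. -/
def idOrder {K : ℕ} (L : Fin K → ℕ) : (k : Fin K) → Equiv.Perm (Fin (L k)) :=
  fun _ => Equiv.refl _

/-- The term `max({0} ∪ {r_k^{[π_k(l')]} + α_{kk}^{[π_k(l')]} : l' < l, (π_k(l'),k) ∈ S}
∪ {r_j^{[l_j]} + α_{jk}^{[l_j]} : (l_j,j) ∈ S, j ≠ k})` in the polyhedral TIN constraints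
(expressed as a supremum of the corresponding finite nonempty set of reals). -/
noncomputable def innerMax {K : ℕ} (L : Fin K → ℕ)
    (α : (k : Fin K) → Fin (L k) → Fin K → ℝ)
    (π : (k : Fin K) → Equiv.Perm (Fin (L k)))
    (S : Set (User L)) (r : (k : Fin K) → Fin (L k) → ℝ)
    (k : Fin K) (l : Fin (L k)) : ℝ :=
  sSup (insert (0 : ℝ)
    ({x : ℝ | ∃ l' : Fin (L k), l' < l ∧ (⟨k, π k l'⟩ : User L) ∈ S ∧
        x = r k (π k l') + α k (π k l') k} ∪
     {x : ℝ | ∃ (j : Fin K) (lj : Fin (L j)), j ≠ k ∧ (⟨j, lj⟩ : User L) ∈ S ∧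
        x = r j lj + α j lj k}))

/-- The polyhedral TIN region `P_π(S)`: `d` is nonnegative, vanishes outside `S`, and is
realized by some power allocation `r ≤ 0` on `S`. -/
def polyTIN {K : ℕ} (L : Fin K → ℕ)
    (α : (k : Fin K) → Fin (L k) → Fin K → ℝ)
    (π : (k : Fin K) → Equiv.Perm (Fin (L k)))
    (S : Set (User L))
    (d : (k : Fin K) → Fin (L k) → ℝ) : Prop :=
  (∀ (k : Fin K) (l : Fin (L k)), 0 ≤ d k l) ∧
  (∀ (k : Fin K) (l : Fin (L k)), (⟨k, l⟩ : User L) ∉ S → d k l = 0) ∧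
  ∃ r : (k : Fin K) → Fin (L k) → ℝ,
    (∀ (k : Fin K) (l : Fin (L k)), (⟨k, l⟩ : User L) ∈ S → r k l ≤ 0) ∧
    (∀ (k : Fin K) (l : Fin (L k)), (⟨k, π k l⟩ : User L) ∈ S →
      d k (π k l) ≤ r k (π k l) + α k (π k l) k - innerMax L α π S r k l)

/-- The TIN-achievable region `P*_π` for decoding order `π`: as `P_π(𝒦)` but with the
positive part `max(0, ·)` of the upper bound. -/
def starTIN {K : ℕ} (L : Fin K → ℕ)
    (α : (k : Fin K) → Fin (L k) → Fin K → ℝ)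
    (π : (k : Fin K) → Equiv.Perm (Fin (L k)))
    (d : (k : Fin K) → Fin (L k) → ℝ) : Prop :=
  (∀ (k : Fin K) (l : Fin (L k)), 0 ≤ d k l) ∧
  ∃ r : (k : Fin K) → Fin (L k) → ℝ,
    (∀ (k : Fin K) (l : Fin (L k)), r k l ≤ 0) ∧
    (∀ (k : Fin K) (l : Fin (L k)),
      d k (π k l) ≤ max 0 (r k (π k l) + α k (π k l) k - innerMax L α π Set.univ r k l))

/-- The TIN cyclic system of GDoF inequalities for decoding order `π`:
(i) per-cell MAC-type bounds, and (ii) cyclic bounds over sequences of distinct cells. -/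
def cyclicSystem {K : ℕ} (L : Fin K → ℕ)
    (α : (k : Fin K) → Fin (L k) → Fin K → ℝ)
    (π : (k : Fin K) → Equiv.Perm (Fin (L k)))
    (d : (k : Fin K) → Fin (L k) → ℝ) : Prop :=
  (∀ (k : Fin K) (l : Fin (L k)),
      ∑ s ∈ Finset.Iic l, d k (π k s) ≤ α k (π k l) k) ∧
  (∀ m : ℕ, 2 ≤ m → m ≤ K → ∀ c : Fin m → Fin K, Function.Injective c →
    ∀ lsel : (j : Fin m) → Fin (L (c j)),
      ∑ j, (∑ s ∈ Finset.Iic (lsel j), d (c j) (π (c j) s)) ≤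
      ∑ j, (α (c j) (π (c j) (lsel j)) (c j) -
            α (c j) (π (c j) (lsel j)) (c (prevIdx j))))

lemma prevIdx_spec {m : ℕ} (j : Fin m) :
    (j.val = 0 ∧ (prevIdx j).val = m - 1) ∨ (0 < j.val ∧ (prevIdx j).val = j.val - 1) := by
  have hm := j.pos
  have hj := j.isLt
  rcases Nat.eq_zero_or_pos j.val with h | h
  · left
    refine ⟨h, ?_⟩
    show (j.val + (m - 1)) % m = m - 1
    rw [h, Nat.zero_add, Nat.mod_eq_of_lt (by omega)]
  · right
    refine ⟨h, ?_⟩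
    show (j.val + (m - 1)) % m = j.val - 1
    have : j.val + (m - 1) = (j.val - 1) + m := by omega
    rw [this, Nat.add_mod_right, Nat.mod_eq_of_lt (by omega)]

lemma nextIdx_spec {m : ℕ} (j : Fin m) :
    (j.val = m - 1 ∧ (nextIdx j).val = 0) ∨ (j.val < m - 1 ∧ (nextIdx j).val = j.val + 1) := by
  have hm := j.pos
  have hj := j.isLt
  rcases eq_or_ne j.val (m - 1) with h | h
  · left
    refine ⟨h, ?_⟩
    show (j.val + 1) % m = 0
    have : j.val + 1 = m := by omega
    rw [this, Nat.mod_self]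
  · right
    refine ⟨by omega, ?_⟩
    show (j.val + 1) % m = j.val + 1
    rw [Nat.mod_eq_of_lt (by omega)]

lemma prevIdx_nextIdx {m : ℕ} (j : Fin m) : prevIdx (nextIdx j) = j := by
  have h1 := nextIdx_spec j
  have h2 := prevIdx_spec (nextIdx j)
  have hm := j.pos
  have hj := j.isLt
  apply Fin.ext
  omega

lemma nextIdx_prevIdx {m : ℕ} (j : Fin m) : nextIdx (prevIdx j) = j := by
  have h1 := prevIdx_spec j
  have h2 := nextIdx_spec (prevIdx j)
  have hm := j.pos
  have hj := j.isLt
  have hp := (prevIdx j).isLt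
  apply Fin.ext
  omega

/-- `nextIdx` as an equivalence. -/
def nextEquiv (m : ℕ) : Fin m ≃ Fin m where
  toFun := nextIdx
  invFun := prevIdx
  left_inv := prevIdx_nextIdx
  right_inv := nextIdx_prevIdx

lemma succAbove_spec {n : ℕ} (p : Fin (n+1)) (t : Fin n) :
    (t.val < p.val ∧ (p.succAbove t).val = t.val) ∨
    (p.val ≤ t.val ∧ (p.succAbove t).val = t.val + 1) := by
  rw [Fin.succAbove]
  split
  · next h => exact Or.inl ⟨by simpa [Fin.lt_def] using h, rfl⟩
  · next h => exact Or.inr ⟨by simpa [Fin.lt_def] using h, rfl⟩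

/-- The cyclic interference sum for a cycle of cells `c` with per-position
interference profiles `f`.  For `m ≤ 1` there is no interference term. -/
noncomputable def cycSum {K : ℕ} (m : ℕ) (c : Fin m → Fin K) (f : Fin m → Fin K → ℝ) : ℝ :=
  (∑ j, f j (c j)) - (if 2 ≤ m then ∑ j, f j (c (prevIdx j)) else 0)

lemma sA_prevIdx_comm {m : ℕ} (p : Fin (m+1)) (t : Fin m)
    (ht : p.succAbove t ≠ nextIdx p) :
    prevIdx (p.succAbove t) = p.succAbove (prevIdx t) := by
  have h1 := succAbove_spec p t
  have h2 := prevIdx_spec (p.succAbove t)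
  have h3 := prevIdx_spec t
  have h4 := succAbove_spec p (prevIdx t)
  have h5 := nextIdx_spec p
  have ht' : (p.succAbove t).val ≠ (nextIdx p).val := fun h => ht (Fin.ext h)
  have := t.isLt
  have := p.isLt
  have := (prevIdx t).isLt
  apply Fin.ext
  omega

lemma sA_prevIdx_bridge {m : ℕ} (p : Fin (m+1)) (t : Fin m)
    (ht : p.succAbove t = nextIdx p) (hm : 2 ≤ m) :
    p.succAbove (prevIdx t) = prevIdx p := by
  have h1 := succAbove_spec p t
  have h3 := prevIdx_spec t
  have h4 := succAbove_spec p (prevIdx t)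
  have h5 := nextIdx_spec p
  have h6 := prevIdx_spec p
  have ht' : (p.succAbove t).val = (nextIdx p).val := congrArg Fin.val ht
  have := t.isLt
  have := p.isLt
  have := (prevIdx t).isLt
  apply Fin.ext
  omega

lemma nextIdx_ne_self {m : ℕ} (p : Fin (m+1)) (hm : 1 ≤ m) : nextIdx p ≠ p := by
  have h := nextIdx_spec p
  have := p.isLt
  intro hc
  have : (nextIdx p).val = p.val := congrArg Fin.val hc
  omega

lemma nextIdx_ne_prevIdx {m : ℕ} (p : Fin (m+1)) (hm : 2 ≤ m) : nextIdx p ≠ prevIdx p := by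
  have h1 := nextIdx_spec p
  have h2 := prevIdx_spec p
  have := p.isLt
  intro hc
  have : (nextIdx p).val = (prevIdx p).val := congrArg Fin.val hc
  omega

lemma prevIdx_ne_self {m : ℕ} (p : Fin (m+1)) (hm : 1 ≤ m) : prevIdx p ≠ p := by
  have h := prevIdx_spec p
  have := p.isLt
  intro hc
  have : (prevIdx p).val = p.val := congrArg Fin.val hc
  omega

lemma cycSum_drop {K m : ℕ} (c : Fin (m+1) → Fin K) (f : Fin (m+1) → Fin K → ℝ)
    (hf0 : ∀ j i, 0 ≤ f j i)
    (hC2c : ∀ b a a' : Fin (m+1), b ≠ a → b ≠ a' →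
      f b (c a') + f a (c b) - (if a = a' then 0 else f a (c a')) ≤ f b (c b))
    (p : Fin (m+1)) :
    cycSum m (fun t => c (p.succAbove t)) (fun t => f (p.succAbove t)) ≤ cycSum (m+1) c f := by
  rcases Nat.lt_or_ge m 2 with hm | hm
  · match m, c, f, hC2c, p with
    | 0, c, f, hC2c, p =>
        simp only [cycSum]
        simp only [Finset.univ_eq_empty, Finset.sum_empty, Fin.sum_univ_one]
        have := hf0 0 (c 0)
        simp only [Fin.sum_univ_succ, Finset.univ_eq_empty, Finset.sum_empty, add_zero]
        norm_num
        exact this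
    | 1, c, f, hC2c, p =>
        have hq : p.succAbove 0 = prevIdx p := by
          have h1 := succAbove_spec p 0
          have h2 := prevIdx_spec p
          have := p.isLt
          apply Fin.ext; omega
        have hq2 : prevIdx (p.succAbove 0) = p := by
          have h1 := succAbove_spec p 0
          have h2 := prevIdx_spec (p.succAbove 0)
          have := p.isLt
          have := (p.succAbove (0 : Fin 1)).isLt
          apply Fin.ext; omega
        have h := hC2c p (p.succAbove 0) (p.succAbove 0)
          (Ne.symm (Fin.succAbove_ne p 0)) (Ne.symm (Fin.succAbove_ne p 0))
        rw [if_pos rfl] at h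
        have eRHS : ∑ j : Fin (1+1), f j (c j)
            = f p (c p) + ∑ t : Fin 1, f (p.succAbove t) (c (p.succAbove t)) :=
          Fin.sum_univ_succAbove _ p
        have eRHS2 : ∑ j : Fin (1+1), f j (c (prevIdx j))
            = f p (c (prevIdx p)) + ∑ t : Fin 1, f (p.succAbove t) (c (prevIdx (p.succAbove t))) :=
          Fin.sum_univ_succAbove _ p
        simp only [Fin.sum_univ_succ, Finset.univ_eq_empty, Finset.sum_empty, add_zero]
          at eRHS eRHS2
        rw [hq2] at eRHS2
        rw [← hq] at eRHS2
        simp only [cycSum, Fin.sum_univ_succ, Finset.univ_eq_empty, Finset.sum_empty, add_zero]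
        rw [if_neg (by omega), if_pos (by omega)]
        rw [eRHS, eRHS2]
        linarith [h]
  · -- main case `2 ≤ m`
    have hnp : nextIdx p ≠ p := nextIdx_ne_self p (by omega)
    obtain ⟨t₀, ht₀⟩ := Fin.exists_succAbove_eq hnp
    have e1 : ∑ j : Fin (m+1), f j (c j)
        = f p (c p) + ∑ t : Fin m, f (p.succAbove t) (c (p.succAbove t)) :=
      Fin.sum_univ_succAbove (fun j => f j (c j)) p
    have e2 : ∑ j : Fin (m+1), f j (c (prevIdx j))
        = f p (c (prevIdx p)) + ∑ t : Fin m, f (p.succAbove t) (c (prevIdx (p.succAbove t))) :=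
      Fin.sum_univ_succAbove (fun j => f j (c (prevIdx j))) p
    have e3 : ∑ t : Fin m, (f (p.succAbove t) (c (prevIdx (p.succAbove t)))
        - f (p.succAbove t) (c (p.succAbove (prevIdx t))))
        = f (nextIdx p) (c p) - f (nextIdx p) (c (prevIdx p)) := by
      rw [Fintype.sum_eq_single t₀]
      · rw [ht₀, prevIdx_nextIdx, sA_prevIdx_bridge p t₀ ht₀ hm]
      · intro t ht
        rw [sA_prevIdx_comm p t, sub_self]
        intro hc
        exact ht (Fin.succAbove_right_injective (hc.trans ht₀.symm))
    have key : f p (c (prevIdx p)) + f (nextIdx p) (c p) - f (nextIdx p) (c (prevIdx p))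
        ≤ f p (c p) := by
      have := hC2c p (nextIdx p) (prevIdx p) (Ne.symm hnp)
        (Ne.symm (prevIdx_ne_self p (by omega)))
      rwa [if_neg (nextIdx_ne_prevIdx p hm)] at this
    have e3' : ∑ t : Fin m, f (p.succAbove t) (c (prevIdx (p.succAbove t)))
        - ∑ t : Fin m, f (p.succAbove t) (c (p.succAbove (prevIdx t)))
        = f (nextIdx p) (c p) - f (nextIdx p) (c (prevIdx p)) := by
      rw [← Finset.sum_sub_distrib]; exact e3
    simp only [cycSum, if_pos hm, if_pos (by omega : 2 ≤ m + 1)]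
    linarith [e1, e2, e3', key]

lemma cycSum_sub {K : ℕ} : ∀ (m : ℕ) (c : Fin m → Fin K) (f : Fin m → Fin K → ℝ),
    (∀ j i, 0 ≤ f j i) →
    (∀ b a a' : Fin m, b ≠ a → b ≠ a' →
      f b (c a') + f a (c b) - (if a = a' then 0 else f a (c a')) ≤ f b (c b)) →
    ∀ (n : ℕ) (e : Fin n → Fin m), StrictMono e →
    cycSum n (fun t => c (e t)) (fun t => f (e t)) ≤ cycSum m c f := by
  intro m
  induction m using Nat.strong_induction_on with
  | _ m IH =>
    intro c f hf0 hC2c n e he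
    have hnm : n ≤ m := by
      have := Fintype.card_le_of_injective e he.injective
      simpa using this
    rcases eq_or_lt_of_le hnm with heq | hlt
    · subst heq
      have hsurj : Function.Surjective e := (Finite.injective_iff_surjective).mp he.injective
      have hrange : Set.range e = Set.range (id : Fin n → Fin n) := by
        rw [Set.range_id, Set.range_eq_univ]; exact hsurj
      have : e = id := by
        haveI inst : WellFoundedLT (Fin n) := inferInstance
        exact (@StrictMono.range_inj (Fin n) (Fin n) _ _ inst e id he strictMono_id).mp hrange
      subst this
      simp only [id]
      exact le_refl _
    · rcases m with _ | m'
      · omega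
      · have hns : ¬ Function.Surjective e := by
          intro h
          have := Fintype.card_le_of_surjective e h
          simp at this
          omega
        rw [Function.Surjective] at hns
        push_neg at hns
        obtain ⟨p, hp⟩ := hns
        have hne : ∀ t, e t ≠ p := fun t h => (hp t) h
        choose e' he' using fun t => Fin.exists_succAbove_eq (hne t)
        have he'mono : StrictMono e' := by
          intro a b hab
          rw [← Fin.succAbove_lt_succAbove_iff (p := p)]
          rw [he' a, he' b]
          exact he hab
        have step1 : cycSum n (fun t => c (e t)) (fun t => f (e t))
            = cycSum n (fun t => (fun s => c (p.succAbove s)) (e' t))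
                       (fun t => (fun s => f (p.succAbove s)) (e' t)) := by
          simp only [he']
        have step2 := IH m' (by omega) (fun s => c (p.succAbove s)) (fun s => f (p.succAbove s))
          (fun j i => hf0 _ i)
          (by
            intro b a a' hba hba'
            have := hC2c (p.succAbove b) (p.succAbove a) (p.succAbove a')
              (fun h => hba (Fin.succAbove_right_injective h))
              (fun h => hba' (Fin.succAbove_right_injective h))
            simpa only [Fin.succAbove_right_injective.eq_iff] using this)
          n e' he'mono
        have step3 := cycSum_drop c f hf0 hC2c p
        rw [step1]
        exact le_trans step2 step3

section InnerMax

variable {K : ℕ} {L : Fin K → ℕ} {α : (k : Fin K) → Fin (L k) → Fin K → ℝ}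
  {π : (k : Fin K) → Equiv.Perm (Fin (L k))} {S : Set (User L)}
  {r : (k : Fin K) → Fin (L k) → ℝ} {k : Fin K} {l : Fin (L k)}

lemma innerMax_bddAbove :
    BddAbove (insert (0 : ℝ)
    ({x : ℝ | ∃ l' : Fin (L k), l' < l ∧ (⟨k, π k l'⟩ : User L) ∈ S ∧
        x = r k (π k l') + α k (π k l') k} ∪
     {x : ℝ | ∃ (j : Fin K) (lj : Fin (L j)), j ≠ k ∧ (⟨j, lj⟩ : User L) ∈ S ∧
        x = r j lj + α j lj k})) := by
  apply Set.Finite.bddAbove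
  apply Set.Finite.insert
  apply Set.Finite.union
  · apply Set.Finite.subset (Set.finite_range
      (fun l' : Fin (L k) => r k (π k l') + α k (π k l') k))
    rintro x ⟨l', _, _, rfl⟩
    exact ⟨l', rfl⟩
  · apply Set.Finite.subset (Set.finite_range
      (fun p : User L => r p.1 p.2 + α p.1 p.2 k))
    rintro x ⟨j, lj, _, _, rfl⟩
    exact ⟨⟨j, lj⟩, rfl⟩

lemma innerMax_nonneg : 0 ≤ innerMax L α π S r k l :=
  le_csSup innerMax_bddAbove (Set.mem_insert _ _)

lemma le_innerMax_cell {l' : Fin (L k)} (h : l' < l) (hS : (⟨k, π k l'⟩ : User L) ∈ S) :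
    r k (π k l') + α k (π k l') k ≤ innerMax L α π S r k l :=
  le_csSup innerMax_bddAbove (Set.mem_insert_of_mem _ (Or.inl ⟨l', h, hS, rfl⟩))

lemma le_innerMax_cross {j : Fin K} (hj : j ≠ k) (lj : Fin (L j))
    (hS : (⟨j, lj⟩ : User L) ∈ S) :
    r j lj + α j lj k ≤ innerMax L α π S r k l :=
  le_csSup innerMax_bddAbove (Set.mem_insert_of_mem _ (Or.inr ⟨j, lj, hj, hS, rfl⟩))

end InnerMax

lemma chain_telescope {β : Type*} [LinearOrder β] [DecidableEq β] (g v : β → ℝ) :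
    ∀ (P : Finset β), (∀ p' p, p' ∈ P → p ∈ P → p' < p → g p ≤ v p - v p') →
    ∀ (hP : P.Nonempty), ∑ p ∈ P, g p ≤ v (P.max' hP) - v (P.min' hP) + g (P.min' hP) := by
  intro P
  induction P using Finset.strongInduction with
  | _ P IH =>
    intro hstep hP
    set M := P.max' hP with hM
    by_cases hsing : P.erase M = ∅
    · have hPeq : P = {M} := by
        apply Finset.eq_singleton_iff_unique_mem.mpr
        refine ⟨P.max'_mem hP, fun x hx => ?_⟩
        by_contra hne
        exact (Finset.ne_empty_of_mem (Finset.mem_erase.mpr ⟨hne, hx⟩)) hsing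
      have h1 : ∑ p ∈ P, g p = g M := by rw [hPeq, Finset.sum_singleton]
      have h2 : P.min' hP = M := by
        have hmm : P.min' hP ∈ ({M} : Finset β) := by
          rw [← hPeq]; exact P.min'_mem hP
        exact Finset.mem_singleton.mp hmm
      rw [h1, h2]
      linarith
    · have hne' : (P.erase M).Nonempty := Finset.nonempty_iff_ne_empty.mpr hsing
      have hsub : P.erase M ⊂ P := Finset.erase_ssubset (P.max'_mem hP)
      have IH' := IH _ hsub
        (fun p' p hp' hp h => hstep p' p (Finset.mem_of_mem_erase hp')
          (Finset.mem_of_mem_erase hp) h) hne'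
      have hmax2 : (P.erase M).max' hne' < M :=
        lt_of_le_of_ne (P.le_max' _ (Finset.mem_of_mem_erase ((P.erase M).max'_mem hne')))
          (Finset.ne_of_mem_erase ((P.erase M).max'_mem hne'))
      have hminne : P.min' hP ≠ M := by
        intro hc
        obtain ⟨y, hy⟩ := hne'
        have h1 : y ≤ M := P.le_max' y (Finset.mem_of_mem_erase hy)
        have h2 : P.min' hP ≤ y := P.min'_le y (Finset.mem_of_mem_erase hy)
        exact (Finset.ne_of_mem_erase hy) (le_antisymm h1 (hc ▸ h2))
      have hminmem : P.min' hP ∈ P.erase M :=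
        Finset.mem_erase.mpr ⟨hminne, P.min'_mem hP⟩
      have hmineq : (P.erase M).min' hne' = P.min' hP :=
        le_antisymm ((P.erase M).min'_le _ hminmem)
          (P.min'_le _ (Finset.mem_of_mem_erase ((P.erase M).min'_mem hne')))
      have hsum : ∑ p ∈ P, g p = g M + ∑ p ∈ P.erase M, g p :=
        (Finset.add_sum_erase _ _ (P.max'_mem hP)).symm
      have hstep' := hstep ((P.erase M).max' hne') M
        (Finset.mem_of_mem_erase ((P.erase M).max'_mem hne')) (P.max'_mem hP) hmax2
      rw [hsum]
      rw [hmineq] at IH'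
      linarith

lemma nextIdx_ne_self2 {n : ℕ} (p : Fin n) (hn : 2 ≤ n) : nextIdx p ≠ p := by
  have h := nextIdx_spec p
  have := p.isLt
  intro hc
  have : (nextIdx p).val = p.val := congrArg Fin.val hc
  omega

lemma prevIdx_ne_self2 {n : ℕ} (p : Fin n) (hn : 2 ≤ n) : prevIdx p ≠ p := by
  have h := prevIdx_spec p
  have := p.isLt
  intro hc
  have : (prevIdx p).val = p.val := congrArg Fin.val hc
  omega

lemma cycSum_zero {K : ℕ} (c : Fin 0 → Fin K) (f : Fin 0 → Fin K → ℝ) :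
    cycSum 0 c f = 0 := by simp [cycSum]

lemma cycSum_one {K : ℕ} (c : Fin 1 → Fin K) (f : Fin 1 → Fin K → ℝ) :
    cycSum 1 c f = f 0 (c 0) := by
  simp [cycSum, Fin.sum_univ_one]

section Main

variable {K : ℕ} {L : Fin K → ℕ} {α : (k : Fin K) → Fin (L k) → Fin K → ℝ}

/-- Direction (I): any achievable point satisfies the identity-order cyclic system. -/
lemma star_subset_cyclic
    (hα : ∀ (k : Fin K) (l : Fin (L k)) (i : Fin K), 0 ≤ α k l i)
    (hmono : ∀ k : Fin K, Monotone (fun l : Fin (L k) => α k l k))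
    (hC1 : ∀ (i j : Fin K), j ≠ i → ∀ (l' l : Fin (L i)), l' < l →
      α i l' i + α i l j - α i l' j ≤ α i l i)
    (hC2 : ∀ (i : Fin K) (li : Fin (L i)) (j : Fin K), j ≠ i →
      ∀ (k : Fin K), k ≠ i → ∀ (lk : Fin (L k)),
      α i li j + α k lk i - (if k = j then 0 else α k lk j) ≤ α i li i)
    (π : (k : Fin K) → Equiv.Perm (Fin (L k)))
    (d : (k : Fin K) → Fin (L k) → ℝ)
    (h : starTIN L α π d) : cyclicSystem L α (idOrder L) d := by
  obtain ⟨hd0, r, hr, hd⟩ := h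
  -- pointwise facts
  have F0 : ∀ (k : Fin K) (p : Fin (L k)), 0 < d k (π k p) →
      d k (π k p) ≤ r k (π k p) + α k (π k p) k - innerMax L α π Set.univ r k p := by
    intro k p hpos
    have hb := hd k p
    rcases max_cases (0:ℝ) (r k (π k p) + α k (π k p) k - innerMax L α π Set.univ r k p) with
      ⟨he, _⟩ | ⟨he, _⟩
    · rw [he] at hb; linarith
    · rwa [he] at hb
  have F2 : ∀ (k : Fin K) (p : Fin (L k)), 0 < d k (π k p) →
      d k (π k p) ≤ r k (π k p) + α k (π k p) k := by
    intro k p hpos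
    have h1 := F0 k p hpos
    have h2 : (0:ℝ) ≤ innerMax L α π Set.univ r k p := innerMax_nonneg
    linarith
  have F1 : ∀ (k : Fin K) (p' p : Fin (L k)), p' < p → 0 < d k (π k p) →
      d k (π k p) ≤ (r k (π k p) + α k (π k p) k) - (r k (π k p') + α k (π k p') k) := by
    intro k p' p hlt hpos
    have h1 := F0 k p hpos
    have h2 := le_innerMax_cell (α := α) (π := π) (r := r) hlt (Set.mem_univ _)
    linarith
  have F3 : ∀ (k : Fin K) (p : Fin (L k)) (j : Fin K), j ≠ k → ∀ lj : Fin (L j),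
      0 < d k (π k p) →
      d k (π k p) ≤ (r k (π k p) + α k (π k p) k) - (r j lj + α j lj k) := by
    intro k p j hj lj hpos
    have h1 := F0 k p hpos
    have h2 := le_innerMax_cross (α := α) (π := π) (r := r) (l := p) hj lj (Set.mem_univ _)
    linarith
  -- the per-cell "key" bound over the active users below level l
  have key : ∀ (k : Fin K) (l : Fin (L k)),
      ((Iic l).filter (fun s => 0 < d k s)).Nonempty →
      ∃ top : Fin (L k), top ≤ l ∧
        (∑ s ∈ (Iic l).filter (fun s => 0 < d k s), d k s
          ≤ r k top + α k top k) ∧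
        (∀ (j : Fin K), j ≠ k → ∀ lj : Fin (L j),
          ∑ s ∈ (Iic l).filter (fun s => 0 < d k s), d k s
            ≤ r k top + α k top k - (r j lj + α j lj k)) := by
    intro k l hA
    set A := (Iic l).filter (fun s => 0 < d k s) with hAdef
    set P := A.image (π k).symm with hPdef
    have hPne : P.Nonempty := hA.image _
    have hmemP : ∀ p ∈ P, π k p ∈ A := by
      intro p hp
      obtain ⟨s, hs, rfl⟩ := Finset.mem_image.mp hp
      rwa [Equiv.apply_symm_apply]
    have hposP : ∀ p ∈ P, 0 < d k (π k p) := by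
      intro p hp
      have := hmemP p hp
      exact (Finset.mem_filter.mp this).2
    have hsum : ∑ p ∈ P, d k (π k p) = ∑ s ∈ A, d k s := by
      rw [hPdef, Finset.sum_image (fun x _ y _ h => (π k).symm.injective h)]
      exact Finset.sum_congr rfl (fun s _ => by rw [Equiv.apply_symm_apply])
    have htel := chain_telescope (fun p => d k (π k p))
      (fun p => r k (π k p) + α k (π k p) k) P
      (fun p' p hp' hp hlt => F1 k p' p hlt (hposP p hp)) hPne
    have htopA : π k (P.max' hPne) ∈ A := hmemP _ (P.max'_mem hPne)
    have hbotA : π k (P.min' hPne) ∈ A := hmemP _ (P.min'_mem hPne)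
    refine ⟨π k (P.max' hPne), Finset.mem_Iic.mp (Finset.mem_filter.mp htopA).1, ?_, ?_⟩
    · have hbot := F2 k (P.min' hPne) ((Finset.mem_filter.mp hbotA).2)
      rw [← hsum]
      linarith
    · intro j hj lj
      have hbot := F3 k (P.min' hPne) j hj lj ((Finset.mem_filter.mp hbotA).2)
      rw [← hsum]
      linarith
  constructor
  · -- per-cell MAC bounds
    intro k l
    simp only [idOrder, Equiv.refl_apply]
    have hsplit : ∑ s ∈ (Iic l).filter (fun s => 0 < d k s), d k s = ∑ s ∈ Iic l, d k s :=
      Finset.sum_filter_of_ne (fun x _ hne => lt_of_le_of_ne (hd0 k x) (Ne.symm hne))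
    rw [← hsplit]
    rcases Finset.eq_empty_or_nonempty ((Iic l).filter (fun s => 0 < d k s)) with hemp | hne
    · rw [hemp, Finset.sum_empty]; exact hα k l k
    · obtain ⟨top, htople, hb1, _⟩ := key k l hne
      have h1 : r k top ≤ 0 := hr k top
      have h2 : α k top k ≤ α k l k := hmono k htople
      linarith
  · -- cyclic bounds
    intro m hm2 hmK c hc lsel
    simp only [idOrder, Equiv.refl_apply]
    have hf0 : ∀ (j : Fin m) (i : Fin K), 0 ≤ (fun (j : Fin m) (i : Fin K) => α (c j) (lsel j) i) j i :=
      fun j i => hα _ _ _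
    have hC2c : ∀ b a a' : Fin m, b ≠ a → b ≠ a' →
        α (c b) (lsel b) (c a') + α (c a) (lsel a) (c b)
          - (if a = a' then 0 else α (c a) (lsel a) (c a')) ≤ α (c b) (lsel b) (c b) := by
      intro b a a' hba hba'
      have hja' : c a' ≠ c b := fun h => hba' (hc h).symm
      have hka : c a ≠ c b := fun h => hba (hc h).symm
      have h := hC2 (c b) (lsel b) (c a') hja' (c a) hka (lsel a)
      have hiff : (c a = c a') ↔ (a = a') := ⟨fun hh => hc hh, congrArg c⟩
      simp only [hiff] at h
      exact h
    have hRHS : ∑ j, (α (c j) (lsel j) (c j) - α (c j) (lsel j) (c (prevIdx j)))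
        = cycSum m c (fun j i => α (c j) (lsel j) i) := by
      rw [cycSum, if_pos hm2, ← Finset.sum_sub_distrib]
    rw [hRHS]
    have hAj : ∀ j : Fin m, ∑ s ∈ Iic (lsel j), d (c j) s
        = ∑ s ∈ (Iic (lsel j)).filter (fun s => 0 < d (c j) s), d (c j) s := fun j =>
      (Finset.sum_filter_of_ne (fun x _ hne => lt_of_le_of_ne (hd0 _ x) (Ne.symm hne))).symm
    set E := univ.filter (fun j : Fin m =>
      ((Iic (lsel j)).filter (fun s => 0 < d (c j) s)).Nonempty) with hEdef
    have hLHS : ∑ j, ∑ s ∈ Iic (lsel j), d (c j) s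
        = ∑ j ∈ E, ∑ s ∈ (Iic (lsel j)).filter (fun s => 0 < d (c j) s), d (c j) s := by
      rw [Finset.sum_congr rfl (fun j _ => hAj j)]
      refine (Finset.sum_filter_of_ne (fun j _ hne => ?_)).symm
      rcases Finset.eq_empty_or_nonempty
        ((Iic (lsel j)).filter (fun s => 0 < d (c j) s)) with he | hne'
      · exact absurd (by rw [he, Finset.sum_empty]) hne
      · exact hne'
    rcases Nat.lt_or_ge E.card 1 with hn0 | hn1
    · -- no active cell
      have hE0 : E = ∅ := Finset.card_eq_zero.mp (by omega)
      rw [hLHS, hE0, Finset.sum_empty]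
      have h := cycSum_sub m c (fun j i => α (c j) (lsel j) i) hf0 hC2c 0
        Fin.elim0 (by intro a; exact a.elim0)
      rw [cycSum_zero] at h
      exact h
    rcases Nat.lt_or_ge E.card 2 with hn1' | hn2
    · -- exactly one active cell
      have hcard : E.card = 1 := by omega
      obtain ⟨a, ha⟩ := Finset.card_eq_one.mp hcard
      have haE : a ∈ E := ha ▸ Finset.mem_singleton_self a
      have hAa : ((Iic (lsel a)).filter (fun s => 0 < d (c a) s)).Nonempty :=
        (Finset.mem_filter.mp haE).2
      obtain ⟨top, htople, hb1, _⟩ := key (c a) (lsel a) hAa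
      rw [hLHS, ha, Finset.sum_singleton]
      have hsm : StrictMono (fun _ : Fin 1 => a) := by
        intro x y hxy
        exfalso
        have hx := x.isLt
        have hy := y.isLt
        have := Fin.lt_def.mp hxy
        omega
      have h := cycSum_sub m c (fun j i => α (c j) (lsel j) i) hf0 hC2c 1 (fun _ => a) hsm
      rw [cycSum_one] at h
      have h2 : α (c a) top (c a) ≤ α (c a) (lsel a) (c a) := hmono (c a) htople
      have hr' := hr (c a) top
      calc ∑ s ∈ (Iic (lsel a)).filter (fun s => 0 < d (c a) s), d (c a) s
          ≤ r (c a) top + α (c a) top (c a) := hb1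
        _ ≤ α (c a) (lsel a) (c a) := by linarith
        _ ≤ cycSum m c (fun j i => α (c j) (lsel j) i) := h
    · -- at least two active cells
      have hcn : E.card = E.card := rfl
      set e := E.orderEmbOfFin hcn with hedef
      have heE : ∀ t : Fin E.card, e t ∈ E := fun t => Finset.orderEmbOfFin_mem E hcn t
      have hsme : StrictMono ⇑e := e.strictMono
      have hei : Function.Injective ⇑e := hsme.injective
      have hsumE : ∑ j ∈ E, ∑ s ∈ (Iic (lsel j)).filter (fun s => 0 < d (c j) s), d (c j) s
          = ∑ t : Fin E.card,
              ∑ s ∈ (Iic (lsel (e t))).filter (fun s => 0 < d (c (e t)) s), d (c (e t)) s := by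
        refine (Finset.sum_bij (fun (t : Fin E.card) _ => e t) (fun t _ => heE t)
          (fun a _ b _ h => hei h) (fun j hj => ?_) (fun t _ => rfl)).symm
        have hj' : j ∈ Set.range ⇑e := by
          rw [Finset.range_orderEmbOfFin]
          exact hj
        obtain ⟨t, ht⟩ := hj'
        exact ⟨t, Finset.mem_univ t, ht⟩
      have hAt : ∀ t : Fin E.card,
          ((Iic (lsel (e t))).filter (fun s => 0 < d (c (e t)) s)).Nonempty :=
        fun t => (Finset.mem_filter.mp (heE t)).2
      choose top htople hb1 hb2 using fun t : Fin E.card => key (c (e t)) (lsel (e t)) (hAt t)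
      have hper : ∀ t : Fin E.card,
          ∑ s ∈ (Iic (lsel (e t))).filter (fun s => 0 < d (c (e t)) s), d (c (e t)) s
          ≤ ((r (c (e t)) (top t) + α (c (e t)) (top t) (c (e t)))
            - (r (c (e (nextIdx t))) (top (nextIdx t))
               + α (c (e (nextIdx t))) (top (nextIdx t)) (c (e (nextIdx t)))))
            + (α (c (e (nextIdx t))) (top (nextIdx t)) (c (e (nextIdx t)))
               - α (c (e (nextIdx t))) (top (nextIdx t)) (c (e t))) := by
        intro t
        have hnet : c (e (nextIdx t)) ≠ c (e t) :=
          fun h => nextIdx_ne_self2 t hn2 (hei (hc h))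
        have := hb2 t (c (e (nextIdx t))) hnet (top (nextIdx t))
        linarith
      have hsum1 : ∑ t : Fin E.card,
            (r (c (e (nextIdx t))) (top (nextIdx t))
              + α (c (e (nextIdx t))) (top (nextIdx t)) (c (e (nextIdx t))))
          = ∑ t : Fin E.card, (r (c (e t)) (top t) + α (c (e t)) (top t) (c (e t))) :=
        Fintype.sum_equiv (nextEquiv E.card) _ _ (fun x => rfl)
      have hsumG : ∑ t : Fin E.card,
            (α (c (e (nextIdx t))) (top (nextIdx t)) (c (e (nextIdx t)))
              - α (c (e (nextIdx t))) (top (nextIdx t)) (c (e t)))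
          = ∑ s : Fin E.card,
            (α (c (e s)) (top s) (c (e s)) - α (c (e s)) (top s) (c (e (prevIdx s)))) := by
        refine Fintype.sum_equiv (nextEquiv E.card) _ _ (fun x => ?_)
        show _ = α (c (e (nextIdx x))) (top (nextIdx x)) (c (e (nextIdx x)))
          - α (c (e (nextIdx x))) (top (nextIdx x)) (c (e (prevIdx (nextIdx x))))
        rw [prevIdx_nextIdx]
      have hC1' : ∀ s : Fin E.card,
          α (c (e s)) (top s) (c (e s)) - α (c (e s)) (top s) (c (e (prevIdx s)))
          ≤ α (c (e s)) (lsel (e s)) (c (e s)) - α (c (e s)) (lsel (e s)) (c (e (prevIdx s))) := by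
        intro s
        have hnes : c (e (prevIdx s)) ≠ c (e s) :=
          fun h => prevIdx_ne_self2 s hn2 (hei (hc h))
        rcases eq_or_lt_of_le (htople s) with heq | hlt
        · rw [heq]
        · have := hC1 (c (e s)) (c (e (prevIdx s))) hnes (top s) (lsel (e s)) hlt
          linarith
      have hsub := cycSum_sub m c (fun j i => α (c j) (lsel j) i) hf0 hC2c E.card ⇑e hsme
      have hcyc2 : cycSum E.card (fun t => c (e t)) (fun t i => α (c (e t)) (lsel (e t)) i)
          = ∑ s : Fin E.card,
            (α (c (e s)) (lsel (e s)) (c (e s)) - α (c (e s)) (lsel (e s)) (c (e (prevIdx s)))) := by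
        rw [cycSum, if_pos hn2, ← Finset.sum_sub_distrib]
      calc ∑ j, ∑ s ∈ Iic (lsel j), d (c j) s
          = ∑ t : Fin E.card,
              ∑ s ∈ (Iic (lsel (e t))).filter (fun s => 0 < d (c (e t)) s), d (c (e t)) s := by
            rw [hLHS, hsumE]
        _ ≤ ∑ t : Fin E.card,
            (((r (c (e t)) (top t) + α (c (e t)) (top t) (c (e t)))
            - (r (c (e (nextIdx t))) (top (nextIdx t))
               + α (c (e (nextIdx t))) (top (nextIdx t)) (c (e (nextIdx t)))))
            + (α (c (e (nextIdx t))) (top (nextIdx t)) (c (e (nextIdx t)))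
               - α (c (e (nextIdx t))) (top (nextIdx t)) (c (e t)))) :=
            Finset.sum_le_sum (fun t _ => hper t)
        _ = (∑ t : Fin E.card, (r (c (e t)) (top t) + α (c (e t)) (top t) (c (e t)))
            - ∑ t : Fin E.card, (r (c (e (nextIdx t))) (top (nextIdx t))
               + α (c (e (nextIdx t))) (top (nextIdx t)) (c (e (nextIdx t)))))
            + ∑ t : Fin E.card, (α (c (e (nextIdx t))) (top (nextIdx t)) (c (e (nextIdx t)))
               - α (c (e (nextIdx t))) (top (nextIdx t)) (c (e t))) := by
            rw [Finset.sum_add_distrib, Finset.sum_sub_distrib]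
        _ = ∑ t : Fin E.card, (α (c (e (nextIdx t))) (top (nextIdx t)) (c (e (nextIdx t)))
               - α (c (e (nextIdx t))) (top (nextIdx t)) (c (e t))) := by
            rw [hsum1]; ring
        _ = ∑ s : Fin E.card,
            (α (c (e s)) (top s) (c (e s)) - α (c (e s)) (top s) (c (e (prevIdx s)))) := hsumG
        _ ≤ ∑ s : Fin E.card,
            (α (c (e s)) (lsel (e s)) (c (e s)) - α (c (e s)) (lsel (e s)) (c (e (prevIdx s)))) :=
            Finset.sum_le_sum (fun s _ => hC1' s)
        _ = cycSum E.card (fun t => c (e t)) (fun t i => α (c (e t)) (lsel (e t)) i) := hcyc2.symm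
        _ ≤ cycSum m c (fun j i => α (c j) (lsel j) i) := hsub

end Main

/-! ### Path potentials for the converse construction -/

noncomputable def pathVal {K : ℕ} (cap : Fin K → ℝ) (w : Fin K → Fin K → ℝ) :
    List (Fin K) → ℝ
  | [] => 0
  | [a] => cap a
  | a :: b :: t => w a b + pathVal cap w (b :: t)

noncomputable def chainW {K : ℕ} (w : Fin K → Fin K → ℝ) : List (Fin K) → ℝ
  | [] => 0
  | [_] => 0
  | a :: b :: t => w a b + chainW w (b :: t)

section Path

variable {K : ℕ} (cap : Fin K → ℝ) (w : Fin K → Fin K → ℝ)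

lemma pathVal_cons (j : Fin K) (q : List (Fin K)) (h : q ≠ []) :
    pathVal cap w (j :: q) = w j (q.head h) + pathVal cap w q := by
  match q with
  | [] => exact absurd rfl h
  | a :: t => rfl

lemma chainW_cons (j : Fin K) (q : List (Fin K)) (h : q ≠ []) :
    chainW w (j :: q) = w j (q.head h) + chainW w q := by
  match q with
  | [] => exact absurd rfl h
  | a :: t => rfl

lemma pathVal_eq_chainW : ∀ (q : List (Fin K)) (h : q ≠ []),
    pathVal cap w q = chainW w q + cap (q.getLast h) := by
  intro q
  induction q with
  | nil => intro h; exact absurd rfl h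
  | cons a t IH =>
    intro h
    match t, IH with
    | [], _ => simp [pathVal, chainW]
    | b :: t', IH =>
      have ht : (b :: t') ≠ [] := by simp
      have h1 : pathVal cap w (a :: b :: t') = w a b + pathVal cap w (b :: t') := rfl
      have h2 : chainW w (a :: b :: t') = w a b + chainW w (b :: t') := rfl
      have h3 : (a :: b :: t').getLast h = (b :: t').getLast ht := by
        simp [List.getLast_cons]
      rw [h1, h2, h3, IH ht]
      ring

lemma pathVal_split : ∀ (q₁ : List (Fin K)) (j : Fin K) (q₂ : List (Fin K)),
    pathVal cap w (q₁ ++ j :: q₂) = chainW w (q₁ ++ [j]) + pathVal cap w (j :: q₂) := by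
  intro q₁
  induction q₁ with
  | nil => intro j q₂; simp [chainW]
  | cons a t IH =>
    intro j q₂
    match t with
    | [] =>
      show pathVal cap w (a :: j :: q₂) = chainW w [a, j] + pathVal cap w (j :: q₂)
      have h1 : pathVal cap w (a :: j :: q₂) = w a j + pathVal cap w (j :: q₂) := rfl
      have h2 : chainW w [a, j] = w a j + chainW w [j] := rfl
      have h3 : chainW w [j] = 0 := rfl
      rw [h1, h2, h3]; ring
    | b :: t' =>
      have h1 : pathVal cap w ((a :: b :: t') ++ j :: q₂)
          = w a b + pathVal cap w ((b :: t') ++ j :: q₂) := rfl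
      have h2 : chainW w ((a :: b :: t') ++ [j]) = w a b + chainW w ((b :: t') ++ [j]) := rfl
      rw [h1, h2, IH j q₂]
      ring

lemma chainW_getD : ∀ (u : List (Fin K)) (h : u ≠ []) (z : Fin K),
    chainW w u + w (u.getLast h) z = ∑ i : Fin u.length, w (u.get i) (u.getD (i.val+1) z) := by
  intro u
  induction u with
  | nil => intro h; exact absurd rfl h
  | cons a t IH =>
    intro h z
    match t, IH with
    | [], _ =>
      show chainW w [a] + w a z = _
      have : chainW w [a] = 0 := rfl
      rw [this]
      simp [Fin.sum_univ_one, List.getD]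
    | b :: t', IH =>
      have ht : (b :: t') ≠ [] := by simp
      have h2 : (a :: b :: t').getLast h = (b :: t').getLast ht := by
        simp [List.getLast_cons]
      have h1 : chainW w (a :: b :: t') = w a b + chainW w (b :: t') := rfl
      rw [h1, h2]
      have h3 := IH ht z
      have h4 : ∑ i : Fin (a :: b :: t').length, w ((a :: b :: t').get i)
            ((a :: b :: t').getD (i.val+1) z)
          = w a b + ∑ i : Fin (b :: t').length, w ((b :: t').get i)
            ((b :: t').getD (i.val+1) z) := by
        simp only [List.length_cons]
        rw [Fin.sum_univ_succ]
        simp [List.getD_cons_succ, List.getD_cons_zero, Fin.val_succ, List.get_cons_succ]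
      rw [h4]
      linarith [h3]

end Path

def revIdx {n : ℕ} (j : Fin n) : Fin n := ⟨(n - j.val) % n, Nat.mod_lt _ j.pos⟩

lemma revIdx_spec {n : ℕ} (j : Fin n) :
    (j.val = 0 ∧ (revIdx j).val = 0) ∨ (0 < j.val ∧ (revIdx j).val = n - j.val) := by
  have hm := j.pos
  have hj := j.isLt
  rcases Nat.eq_zero_or_pos j.val with h | h
  · left
    refine ⟨h, ?_⟩
    show (n - j.val) % n = 0
    rw [h, Nat.sub_zero, Nat.mod_self]
  · right
    refine ⟨h, ?_⟩
    show (n - j.val) % n = n - j.val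
    rw [Nat.mod_eq_of_lt (by omega)]

@[simp] lemma revIdx_revIdx {n : ℕ} (j : Fin n) : revIdx (revIdx j) = j := by
  have h1 := revIdx_spec j
  have h2 := revIdx_spec (revIdx j)
  have := j.isLt
  apply Fin.ext
  omega

lemma prevIdx_revIdx {n : ℕ} (j : Fin n) : prevIdx (revIdx j) = revIdx (nextIdx j) := by
  have h1 := revIdx_spec j
  have h2 := prevIdx_spec (revIdx j)
  have h3 := nextIdx_spec j
  have h4 := revIdx_spec (nextIdx j)
  have := j.isLt
  have := (revIdx j).isLt
  have := (nextIdx j).isLt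
  apply Fin.ext
  omega

def revEquiv (n : ℕ) : Fin n ≃ Fin n where
  toFun := revIdx
  invFun := revIdx
  left_inv := revIdx_revIdx
  right_inv := revIdx_revIdx

section Main2

variable {K : ℕ} {L : Fin K → ℕ} {α : (k : Fin K) → Fin (L k) → Fin K → ℝ}

/-- The cyclic inequalities in "next" orientation, for the identity order. -/
lemma cyclic_next (d : (k : Fin K) → Fin (L k) → ℝ)
    (hcyc : cyclicSystem L α (idOrder L) d)
    (n : ℕ) (hn2 : 2 ≤ n) (hnK : n ≤ K) (c : Fin n → Fin K) (hc : Function.Injective c)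
    (lsel : (j : Fin n) → Fin (L (c j))) :
    ∑ j, (∑ s ∈ Iic (lsel j), d (c j) s) ≤
      ∑ j, (α (c j) (lsel j) (c j) - α (c j) (lsel j) (c (nextIdx j))) := by
  have hrevinj : Function.Injective (revIdx (n := n)) := by
    intro a b h
    have := congrArg revIdx h
    rwa [revIdx_revIdx, revIdx_revIdx] at this
  have hrev2 : ∀ j : Fin n, revIdx (prevIdx j) = nextIdx (revIdx j) := by
    intro j
    have h := prevIdx_revIdx (revIdx j)
    rw [revIdx_revIdx] at h
    rw [h, revIdx_revIdx]
  have h := hcyc.2 n hn2 hnK (fun j => c (revIdx j)) (fun a b hab => hrevinj (hc hab))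
    (fun j => lsel (revIdx j))
  simp only [idOrder, Equiv.refl_apply] at h
  have hLHS : ∑ j, (∑ s ∈ Iic (lsel j), d (c j) s)
      = ∑ j, (∑ s ∈ Iic (lsel (revIdx j)), d (c (revIdx j)) s) := by
    refine Fintype.sum_equiv (revEquiv n) _ _ (fun x => ?_)
    show ∑ s ∈ Iic (lsel x), d (c x) s
      = ∑ s ∈ Iic (lsel (revIdx (revIdx x))), d (c (revIdx (revIdx x))) s
    rw [revIdx_revIdx]
  have hRHS : ∑ j, (α (c (revIdx j)) (lsel (revIdx j)) (c (revIdx j))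
        - α (c (revIdx j)) (lsel (revIdx j)) (c (revIdx (prevIdx j))))
      = ∑ j, (α (c j) (lsel j) (c j) - α (c j) (lsel j) (c (nextIdx j))) := by
    refine Fintype.sum_equiv (revEquiv n) _ _ (fun x => ?_)
    show α (c (revIdx x)) (lsel (revIdx x)) (c (revIdx x))
        - α (c (revIdx x)) (lsel (revIdx x)) (c (revIdx (prevIdx x)))
      = α (c (revIdx x)) (lsel (revIdx x)) (c (revIdx x))
        - α (c (revIdx x)) (lsel (revIdx x)) (c (nextIdx (revIdx x)))
    rw [hrev2]
  rw [hLHS, ← hRHS]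
  exact h

end Main2

section Pot

variable {K : ℕ} (cap : Fin K → ℝ) (w : Fin K → Fin K → ℝ)

/-- The set of path values ending (in reverse) at `j`. -/
def XSet (j : Fin K) : Set ℝ :=
  {x : ℝ | ∃ q : List (Fin K), q.Nodup ∧ ∃ h : q ≠ [], q.head h = j ∧ x = pathVal cap w q}

noncomputable def xPot (j : Fin K) : ℝ := sInf (XSet cap w j)

variable (hcap0 : ∀ a, 0 ≤ cap a)
  (hcapw : ∀ a b, w a b ≤ cap a)
  (hcycW : ∀ u : List (Fin K), u.Nodup → ∀ h : u ≠ [], 2 ≤ u.length →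
      0 ≤ chainW w u + w (u.getLast h) (u.head h))

include hcap0 hcapw hcycW in
lemma pathVal_nonneg : ∀ (q : List (Fin K)), q.Nodup → q ≠ [] → 0 ≤ pathVal cap w q := by
  intro q hnd h
  match q with
  | [a] => exact hcap0 a
  | a :: b :: t =>
    rw [pathVal_eq_chainW cap w _ h]
    have h1 := hcycW (a :: b :: t) hnd h (by simp only [List.length_cons]; omega)
    have h2 : w ((a :: b :: t).getLast h) ((a :: b :: t).head h)
        ≤ cap ((a :: b :: t).getLast h) := hcapw _ _
    linarith

lemma XSet_nonempty (j : Fin K) : (XSet cap w j).Nonempty :=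
  ⟨cap j, [j], List.nodup_singleton j, by simp, rfl, rfl⟩

include hcap0 hcapw hcycW in
lemma XSet_nonneg (j : Fin K) : ∀ y ∈ XSet cap w j, 0 ≤ y := by
  rintro y ⟨q, hnd, hne, _, rfl⟩
  exact pathVal_nonneg cap w hcap0 hcapw hcycW q hnd hne

include hcap0 hcapw hcycW in
lemma xPot_nonneg (j : Fin K) : 0 ≤ xPot cap w j :=
  le_csInf (XSet_nonempty cap w j) (XSet_nonneg cap w hcap0 hcapw hcycW j)

include hcap0 hcapw hcycW in
lemma xPot_le_cap (j : Fin K) : xPot cap w j ≤ cap j :=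
  csInf_le ⟨0, XSet_nonneg cap w hcap0 hcapw hcycW j⟩
    ⟨[j], List.nodup_singleton j, by simp, rfl, rfl⟩

include hcap0 hcapw hcycW in
lemma xPot_step (j k : Fin K) (hjk : j ≠ k) : xPot cap w j ≤ xPot cap w k + w j k := by
  apply le_of_forall_pos_le_add
  intro ε hε
  have hlt : sInf (XSet cap w k) < xPot cap w k + ε := by
    have := xPot_nonneg cap w hcap0 hcapw hcycW k
    unfold xPot at *
    linarith
  obtain ⟨y, hy, hylt⟩ := exists_lt_of_csInf_lt (XSet_nonempty cap w k) hlt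
  obtain ⟨q, hnd, hqne, hhead, rfl⟩ := hy
  by_cases hjq : j ∈ q
  · obtain ⟨q₁, q₂, rfl⟩ := List.append_of_mem hjq
    have hq₁ne : q₁ ≠ [] := by
      rintro rfl
      simp only [List.nil_append] at hhead
      exact hjk hhead
    have hsplit := pathVal_split cap w q₁ j q₂
    -- the suffix is a valid path for j
    have hsubl : (j :: q₂).Sublist (q₁ ++ j :: q₂) := List.sublist_append_right q₁ (j :: q₂)
    have hnd2 : (j :: q₂).Nodup := hsubl.nodup hnd
    have hmem : pathVal cap w (j :: q₂) ∈ XSet cap w j :=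
      ⟨j :: q₂, hnd2, by simp, rfl, rfl⟩
    have hxle : xPot cap w j ≤ pathVal cap w (j :: q₂) :=
      csInf_le ⟨0, XSet_nonneg cap w hcap0 hcapw hcycW j⟩ hmem
    -- cycle inequality for q₁ ++ [j]
    have hsubl2 : (q₁ ++ [j]).Sublist (q₁ ++ j :: q₂) :=
      List.Sublist.append_left (by
        exact List.cons_sublist_cons.mpr (List.nil_sublist q₂)) q₁
    have hnd3 : (q₁ ++ [j]).Nodup := hsubl2.nodup hnd
    have hne3 : (q₁ ++ [j]) ≠ [] := by simp
    have hlast3 : (q₁ ++ [j]).getLast hne3 = j := by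
      rw [List.getLast_append]
      simp
    have hhead3 : (q₁ ++ [j]).head hne3 = k := by
      rw [List.head_append]
      rw [← hhead]
      rw [List.head_append]
      simp [hq₁ne, List.isEmpty_iff]
    have hlen3 : 2 ≤ (q₁ ++ [j]).length := by
      have : 1 ≤ q₁.length := List.length_pos_iff.mpr hq₁ne
      simp only [List.length_append, List.length_singleton]
      omega
    have hcyc := hcycW (q₁ ++ [j]) hnd3 hne3 hlen3
    rw [hlast3, hhead3] at hcyc
    linarith
  · have hnd2 : (j :: q).Nodup := List.nodup_cons.mpr ⟨hjq, hnd⟩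
    have hmem : pathVal cap w (j :: q) ∈ XSet cap w j :=
      ⟨j :: q, hnd2, by simp, rfl, rfl⟩
    have hxle : xPot cap w j ≤ pathVal cap w (j :: q) :=
      csInf_le ⟨0, XSet_nonneg cap w hcap0 hcapw hcycW j⟩ hmem
    rw [pathVal_cons cap w j q hqne, hhead] at hxle
    linarith

end Pot

section Main3

variable {K : ℕ} {L : Fin K → ℕ} {α : (k : Fin K) → Fin (L k) → Fin K → ℝ}

lemma cyclic_subset_poly (hL : ∀ k, 1 ≤ L k)
    (hα : ∀ (k : Fin K) (l : Fin (L k)) (i : Fin K), 0 ≤ α k l i)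
    (d : (k : Fin K) → Fin (L k) → ℝ)
    (hd0 : ∀ (k : Fin K) (l : Fin (L k)), 0 ≤ d k l)
    (hcyc : cyclicSystem L α (idOrder L) d) :
    polyTIN L α (idOrder L) Set.univ d := by
  have hne : ∀ k : Fin K, (univ : Finset (Fin (L k))).Nonempty :=
    fun k => ⟨⟨0, hL k⟩, Finset.mem_univ _⟩
  set D : (k : Fin K) → Fin (L k) → ℝ := fun k l => ∑ s ∈ Iic l, d k s with hD
  set cap : Fin K → ℝ := fun k => univ.inf' (hne k) (fun l => α k l k - D k l) with hcap
  set w : Fin K → Fin K → ℝ :=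
    fun j k' => univ.inf' (hne j) (fun lj => α j lj j - α j lj k' - D j lj) with hw
  have hmac : ∀ (k : Fin K) (l : Fin (L k)), D k l ≤ α k l k := by
    intro k l
    have := hcyc.1 k l
    simpa [idOrder] using this
  have hcap0 : ∀ a, 0 ≤ cap a := by
    intro a
    apply Finset.le_inf'
    intro l _
    have := hmac a l
    linarith
  have hcapw : ∀ a b, w a b ≤ cap a := by
    intro a b
    apply Finset.le_inf'
    intro l _
    refine le_trans (Finset.inf'_le _ (Finset.mem_univ l)) ?_
    have := hα a l b
    linarith
  have hcycW : ∀ u : List (Fin K), u.Nodup → ∀ h : u ≠ [], 2 ≤ u.length →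
      0 ≤ chainW w u + w (u.getLast h) (u.head h) := by
    intro u hnd h hlen
    have hnK : u.length ≤ K := by
      have := hnd.length_le_card
      simpa using this
    have hinj : Function.Injective u.get := List.nodup_iff_injective_get.mp hnd
    have hsel : ∀ i : Fin u.length, ∃ lj : Fin (L (u.get i)),
        w (u.get i) (u.get (nextIdx i)) =
          α (u.get i) lj (u.get i) - α (u.get i) lj (u.get (nextIdx i)) - D (u.get i) lj := by
      intro i
      obtain ⟨lj, _, hlj⟩ := Finset.exists_mem_eq_inf' (hne (u.get i))
        (fun lj => α (u.get i) lj (u.get i) - α (u.get i) lj (u.get (nextIdx i)) - D (u.get i) lj)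
      exact ⟨lj, hlj⟩
    choose lsel hlsel using hsel
    have hcn := cyclic_next d hcyc u.length hlen hnK u.get hinj lsel
    have hconv : chainW w u + w (u.getLast h) (u.head h)
        = ∑ i : Fin u.length, w (u.get i) (u.get (nextIdx i)) := by
      rw [chainW_getD w u h (u.head h)]
      apply Finset.sum_congr rfl
      intro i _
      congr 1
      have hspec := nextIdx_spec i
      have hilt := i.isLt
      rcases hspec with ⟨h1, h2⟩ | ⟨h1, h2⟩
      · rw [List.getD_eq_default _ _ (by omega)]
        have hni : nextIdx i = ⟨0, by omega⟩ := Fin.ext h2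
        rw [hni]
        exact (List.get_mk_zero (by omega)).symm
      · rw [List.getD_eq_getElem _ _ (by omega)]
        have hni : nextIdx i = ⟨i.val + 1, by omega⟩ := Fin.ext h2
        simp only [hni, List.get_eq_getElem]
    have hval : ∑ i : Fin u.length, w (u.get i) (u.get (nextIdx i))
        = ∑ i : Fin u.length, (α (u.get i) (lsel i) (u.get i)
            - α (u.get i) (lsel i) (u.get (nextIdx i)))
          - ∑ i : Fin u.length, D (u.get i) (lsel i) := by
      rw [← Finset.sum_sub_distrib]
      exact Finset.sum_congr rfl (fun i _ => by rw [hlsel i])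
    rw [hconv, hval]
    have hlhs : ∑ j, (∑ s ∈ Iic (lsel j), d (u.get j) s) = ∑ i, D (u.get i) (lsel i) := rfl
    rw [hlhs] at hcn
    linarith
  -- assemble the polyhedral TIN point
  refine ⟨hd0, fun k l hmem => absurd (Set.mem_univ _) hmem,
    (fun k l => (xPot cap w k + D k l) - α k l k), ?_, ?_⟩
  · intro k l _
    show xPot cap w k + D k l - α k l k ≤ 0
    have h1 := xPot_le_cap cap w hcap0 hcapw hcycW k
    have h2 : cap k ≤ α k l k - D k l := Finset.inf'_le _ (Finset.mem_univ l)
    linarith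
  · intro k l _
    simp only [idOrder, Equiv.refl_apply]
    have hsup : innerMax L α (idOrder L) Set.univ
        (fun k l => (xPot cap w k + D k l) - α k l k) k l
        ≤ (xPot cap w k + D k l) - d k l := by
      apply csSup_le ⟨0, Set.mem_insert _ _⟩
      intro y hy
      have hx0 := xPot_nonneg cap w hcap0 hcapw hcycW k
      have hdD : d k l ≤ D k l :=
        Finset.single_le_sum (fun i _ => hd0 k i) (Finset.mem_Iic.mpr (le_refl l))
      rcases Set.mem_insert_iff.mp hy with rfl | hy'
      · linarith
      rcases hy' with ⟨l', hl', _, rfl⟩ | ⟨j, lj, hj, _, rfl⟩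
      · -- in-cell term
        simp only [idOrder, Equiv.refl_apply]
        show xPot cap w k + D k l' - α k l' k + α k l' k ≤ xPot cap w k + D k l - d k l
        have hsum : D k l' + d k l ≤ D k l := by
          have hsub : insert l (Iic l') ⊆ Iic l := by
            intro s hs
            rcases Finset.mem_insert.mp hs with rfl | hs'
            · exact Finset.mem_Iic.mpr (le_refl s)
            · exact Finset.mem_Iic.mpr (le_trans (Finset.mem_Iic.mp hs') (le_of_lt hl'))
          have hnotmem : l ∉ Iic l' := fun hmem => absurd (Finset.mem_Iic.mp hmem) (not_le.mpr hl')
          have := Finset.sum_le_sum_of_subset_of_nonneg hsub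
            (fun i _ _ => hd0 k i) (f := fun s => d k s)
          rw [Finset.sum_insert hnotmem] at this
          simp only [hD]
          linarith
        linarith
      · -- cross-cell term
        show xPot cap w j + D j lj - α j lj j + α j lj k ≤ xPot cap w k + D k l - d k l
        have hwle : w j k ≤ α j lj j - α j lj k - D j lj := Finset.inf'_le _ (Finset.mem_univ lj)
        have hstep := xPot_step cap w hcap0 hcapw hcycW j k hj
        have hj0 := hα j lj j
        linarith
    show d k l ≤ xPot cap w k + D k l - α k l k + α k l k
      - innerMax L α (idOrder L) Set.univ (fun k l => (xPot cap w k + D k l) - α k l k) k l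
    have hdD : d k l ≤ D k l :=
      Finset.single_le_sum (fun i _ => hd0 k i) (Finset.mem_Iic.mpr (le_refl l))
    linarith [hsup]

end Main3

section Final

variable {K : ℕ} {L : Fin K → ℕ} {α : (k : Fin K) → Fin (L k) → Fin K → ℝ}

lemma poly_subset_star (d : (k : Fin K) → Fin (L k) → ℝ)
    (h : polyTIN L α (idOrder L) Set.univ d) : starTIN L α (idOrder L) d := by
  obtain ⟨hd0, _, r, hr0, hb⟩ := h
  exact ⟨hd0, r, fun k l => hr0 k l (Set.mem_univ _),
    fun k l => le_trans (hb k l (Set.mem_univ _)) (le_max_right _ _)⟩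

lemma cyclic_convex :
    Convex ℝ {d : (k : Fin K) → Fin (L k) → ℝ |
      (∀ (k : Fin K) (l : Fin (L k)), 0 ≤ d k l) ∧ cyclicSystem L α (idOrder L) d} := by
  rintro x ⟨hx0, hx1, hx2⟩ y ⟨hy0, hy1, hy2⟩ a b ha hb hab
  have happ : ∀ (k : Fin K) (l : Fin (L k)), (a • x + b • y) k l = a * x k l + b * y k l := by
    intro k l
    simp [Pi.add_apply, Pi.smul_apply, smul_eq_mul]
  refine ⟨fun k l => ?_, fun k l => ?_, fun m hm2 hmK c hc lsel => ?_⟩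
  · rw [happ]
    exact add_nonneg (mul_nonneg ha (hx0 k l)) (mul_nonneg hb (hy0 k l))
  · have h1 := hx1 k l
    have h2 := hy1 k l
    simp only [idOrder, Equiv.refl_apply] at h1 h2 ⊢
    have hsum : ∑ s ∈ Iic l, (a • x + b • y) k s
        = a * ∑ s ∈ Iic l, x k s + b * ∑ s ∈ Iic l, y k s := by
      rw [Finset.mul_sum, Finset.mul_sum, ← Finset.sum_add_distrib]
      exact Finset.sum_congr rfl (fun s _ => happ k s)
    rw [hsum]
    have e1 : a * ∑ s ∈ Iic l, x k s ≤ a * α k l k := mul_le_mul_of_nonneg_left h1 ha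
    have e2 : b * ∑ s ∈ Iic l, y k s ≤ b * α k l k := mul_le_mul_of_nonneg_left h2 hb
    have : a * α k l k + b * α k l k = α k l k := by
      rw [← add_mul, hab, one_mul]
    linarith
  · have h1 := hx2 m hm2 hmK c hc lsel
    have h2 := hy2 m hm2 hmK c hc lsel
    simp only [idOrder, Equiv.refl_apply] at h1 h2 ⊢
    have hsum : ∑ j, ∑ s ∈ Iic (lsel j), (a • x + b • y) (c j) s
        = a * (∑ j, ∑ s ∈ Iic (lsel j), x (c j) s)
          + b * (∑ j, ∑ s ∈ Iic (lsel j), y (c j) s) := by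
      rw [Finset.mul_sum, Finset.mul_sum, ← Finset.sum_add_distrib]
      refine Finset.sum_congr rfl (fun j _ => ?_)
      rw [Finset.mul_sum, Finset.mul_sum, ← Finset.sum_add_distrib]
      exact Finset.sum_congr rfl (fun s _ => happ (c j) s)
    rw [hsum]
    have e1 : a * (∑ j, ∑ s ∈ Iic (lsel j), x (c j) s)
        ≤ a * ∑ j, (α (c j) (lsel j) (c j) - α (c j) (lsel j) (c (prevIdx j))) :=
      mul_le_mul_of_nonneg_left h1 ha
    have e2 : b * (∑ j, ∑ s ∈ Iic (lsel j), y (c j) s)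
        ≤ b * ∑ j, (α (c j) (lsel j) (c j) - α (c j) (lsel j) (c (prevIdx j))) :=
      mul_le_mul_of_nonneg_left h2 hb
    have : a * ∑ j, (α (c j) (lsel j) (c j) - α (c j) (lsel j) (c (prevIdx j)))
        + b * ∑ j, (α (c j) (lsel j) (c j) - α (c j) (lsel j) (c (prevIdx j)))
        = ∑ j, (α (c j) (lsel j) (c j) - α (c j) (lsel j) (c (prevIdx j))) := by
      rw [← add_mul, hab, one_mul]
    linarith

end Final


/-- **Theorem 3 (TIN-convexity).**
Under the TIN-convexity conditions (C1) and (C2), the general TIN-achievable GDoF region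
`P* = ∪_π P*_π` is the polyhedron `P_id(𝒦)`; in particular it equals the set of all
nonnegative tuples satisfying the TIN cyclic system for the identity decoding order, and
it is convex. -/
theorem starTIN_polyhedron_of_convexityConditions {K : ℕ} (hK : 1 ≤ K)
    (L : Fin K → ℕ) (hL : ∀ k, 1 ≤ L k)
    (α : (k : Fin K) → Fin (L k) → Fin K → ℝ)
    (hα : ∀ (k : Fin K) (l : Fin (L k)) (i : Fin K), 0 ≤ α k l i)
    (hmono : ∀ k : Fin K, Monotone (fun l : Fin (L k) => α k l k))
    (hC1 : ∀ (i j : Fin K), j ≠ i → ∀ (l' l : Fin (L i)), l' < l →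
      α i l' i + α i l j - α i l' j ≤ α i l i)
    (hC2 : ∀ (i : Fin K) (li : Fin (L i)) (j : Fin K), j ≠ i →
      ∀ (k : Fin K), k ≠ i → ∀ (lk : Fin (L k)),
      α i li j + α k lk i - (if k = j then 0 else α k lk j) ≤ α i li i) :
    ({d : (k : Fin K) → Fin (L k) → ℝ |
        ∃ π : (k : Fin K) → Equiv.Perm (Fin (L k)), starTIN L α π d} =
      {d : (k : Fin K) → Fin (L k) → ℝ | polyTIN L α (idOrder L) Set.univ d}) ∧
    ({d : (k : Fin K) → Fin (L k) → ℝ |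
        ∃ π : (k : Fin K) → Equiv.Perm (Fin (L k)), starTIN L α π d} =
      {d : (k : Fin K) → Fin (L k) → ℝ |
        (∀ (k : Fin K) (l : Fin (L k)), 0 ≤ d k l) ∧
          cyclicSystem L α (idOrder L) d}) ∧
    Convex ℝ {d : (k : Fin K) → Fin (L k) → ℝ |
        ∃ π : (k : Fin K) → Equiv.Perm (Fin (L k)), starTIN L α π d} := by
  have hAC : {d : (k : Fin K) → Fin (L k) → ℝ |
        ∃ π : (k : Fin K) → Equiv.Perm (Fin (L k)), starTIN L α π d} ⊆
      {d : (k : Fin K) → Fin (L k) → ℝ |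
        (∀ (k : Fin K) (l : Fin (L k)), 0 ≤ d k l) ∧ cyclicSystem L α (idOrder L) d} := by
    rintro d ⟨π, hd⟩
    exact ⟨hd.1, star_subset_cyclic hα hmono hC1 hC2 π d hd⟩
  have hCB : {d : (k : Fin K) → Fin (L k) → ℝ |
        (∀ (k : Fin K) (l : Fin (L k)), 0 ≤ d k l) ∧ cyclicSystem L α (idOrder L) d} ⊆
      {d : (k : Fin K) → Fin (L k) → ℝ | polyTIN L α (idOrder L) Set.univ d} := by
    rintro d ⟨h0, hc⟩
    exact cyclic_subset_poly hL hα d h0 hc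
  have hBA : {d : (k : Fin K) → Fin (L k) → ℝ | polyTIN L α (idOrder L) Set.univ d} ⊆
      {d : (k : Fin K) → Fin (L k) → ℝ |
        ∃ π : (k : Fin K) → Equiv.Perm (Fin (L k)), starTIN L α π d} := by
    intro d hd
    exact ⟨idOrder L, poly_subset_star d hd⟩
  have eq2 : {d : (k : Fin K) → Fin (L k) → ℝ |
        ∃ π : (k : Fin K) → Equiv.Perm (Fin (L k)), starTIN L α π d} =
      {d : (k : Fin K) → Fin (L k) → ℝ |
        (∀ (k : Fin K) (l : Fin (L k)), 0 ≤ d k l) ∧ cyclicSystem L α (idOrder L) d} :=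
    Set.Subset.antisymm hAC ((Set.Subset.trans hCB) hBA)
  have eq1 : {d : (k : Fin K) → Fin (L k) → ℝ |
        ∃ π : (k : Fin K) → Equiv.Perm (Fin (L k)), starTIN L α π d} =
      {d : (k : Fin K) → Fin (L k) → ℝ | polyTIN L α (idOrder L) Set.univ d} :=
    Set.Subset.antisymm (Set.Subset.trans hAC hCB) hBA
  refine ⟨eq1, eq2, ?_⟩
  rw [eq2]
  exact cyclic_convex
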